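/- Let Z₂ ~ Exp(mean B), Z₁ ~ Gamma(L, D), and Z ~ having density f_Z(z) = (t^L/(Γ(L)A^L C))e^{−z/C}Υ(L, z/t) (the sum of Gamma(L,A) and Exp(C), A < C, t = (1/A−1/C)^{−1}), all mutually independent. Then the density of Q = Z₂·Z is f_Q(q) = (2t^L/(B·C·A^L))·[K₀(2√(q/(BC))) − ∑_{j=0}^{L−1} ((Bθ)^{−j/2} q^{j/2}/(t^j Γ(j+1)))·K_j(2√(qθ/B))] for q > 0, where θ = 1/C + 1/t and K_j is the modified Bessel function of the second kind. -/

import Mathlib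

open MeasureTheory ProbabilityTheory
open Real Set
open scoped ENNReal

/-- The lower incomplete Gamma function `Υ(a, x) = ∫₀^x u^(a-1) e^(-u) du`. -/
noncomputable def lowerGamma (a : ℕ) (x : ℝ) : ℝ :=
  ∫ u in Set.Ioc (0 : ℝ) x, u ^ (a - 1) * Real.exp (-u)

/-- The modified Bessel function of the second kind, via the integral representation
`K_ν(x) = (1/2) ∫₀^∞ u^(ν-1) exp(-(x/2)(u + 1/u)) du` (valid for `x > 0`). -/
noncomputable def besselK (ν : ℝ) (x : ℝ) : ℝ :=
  (1 / 2) * ∫ u in Set.Ioi (0 : ℝ), u ^ (ν - 1) * Real.exp (-(x / 2) * (u + 1 / u))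

lemma aux_ibp (n : ℕ) (x : ℝ) :
    ∫ u in (0:ℝ)..x, u ^ n * Real.exp (-u) =
      (n.factorial : ℝ) * (1 - Real.exp (-x) * ∑ k ∈ Finset.range (n+1), x ^ k / k.factorial) := by
  induction n with
  | zero =>
      simp [Real.exp_ne_zero, intervalIntegral.integral_comp_neg (fun u => Real.exp u)]
  | succ n ih =>
      have hibp := intervalIntegral.integral_mul_deriv_eq_deriv_mul
        (u := fun t : ℝ => t ^ (n+1)) (u' := fun t : ℝ => (n+1 : ℝ) * t ^ n)
        (v := fun t : ℝ => -Real.exp (-t)) (v' := fun t : ℝ => Real.exp (-t))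
        (a := 0) (b := x)
        (fun t _ => by simpa using (hasDerivAt_pow (n+1) t))
        (fun t _ => by have h := (hasDerivAt_neg t).exp.neg; simp only [mul_neg, mul_one, neg_neg] at h; exact h)
        (by apply Continuous.intervalIntegrable; continuity)
        (by apply Continuous.intervalIntegrable; continuity)
      have h3 : ∫ u in (0:ℝ)..x, ((n+1:ℝ) * u ^ n) * (-Real.exp (-u))
          = -((n+1:ℝ) * ∫ u in (0:ℝ)..x, u ^ n * Real.exp (-u)) := by
        rw [← intervalIntegral.integral_const_mul, ← intervalIntegral.integral_neg]
        congr 1; funext u; ring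
      have h2 : ∫ u in (0:ℝ)..x, u ^ (n+1) * Real.exp (-u)
          = -(x ^ (n+1) * Real.exp (-x)) + (n+1 : ℝ) * ∫ u in (0:ℝ)..x, u ^ n * Real.exp (-u) := by
        rw [hibp, h3]
        simp
      rw [h2, ih]
      rw [Finset.sum_range_succ (n := n+1)]
      push_cast [Nat.factorial_succ]
      field_simp
      ring

lemma lowerGamma_eq (L : ℕ) (hL : 1 ≤ L) (x : ℝ) :
    lowerGamma L x = if 0 ≤ x then
      ((L-1).factorial : ℝ) * (1 - Real.exp (-x) * ∑ k ∈ Finset.range L, x ^ k / k.factorial)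
    else 0 := by
  rw [lowerGamma]
  split_ifs with hx
  · rw [← intervalIntegral.integral_of_le hx]
    have := aux_ibp (L-1) x
    rwa [Nat.sub_add_cancel hL] at this
  · rw [Set.Ioc_eq_empty (by intro h; exact hx (le_of_lt h)), Measure.restrict_empty,
      integral_zero_measure]

lemma lowerGamma_nonneg (L : ℕ) (x : ℝ) : 0 ≤ lowerGamma L x :=
  setIntegral_nonneg measurableSet_Ioc fun u hu =>
    mul_nonneg (pow_nonneg (le_of_lt hu.1) _) (Real.exp_nonneg _)

lemma lowerGamma_pos (L : ℕ) {x : ℝ} (hx : 0 < x) : 0 < lowerGamma L x := by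
  rw [lowerGamma, ← intervalIntegral.integral_of_le hx.le]
  exact intervalIntegral.intervalIntegral_pos_of_pos_on
    (Continuous.intervalIntegrable (by continuity) _ _)
    (fun u hu => mul_pos (pow_pos hu.1 _) (Real.exp_pos _)) hx

lemma lowerGamma_measurable (L : ℕ) (hL : 1 ≤ L) : Measurable (lowerGamma L) := by
  have : lowerGamma L = fun x => if 0 ≤ x then
      ((L-1).factorial : ℝ) * (1 - Real.exp (-x) * ∑ k ∈ Finset.range L, x ^ k / k.factorial)
    else 0 := funext (lowerGamma_eq L hL)
  rw [this]
  exact Measurable.ite (measurableSet_le measurable_const measurable_id) (by fun_prop) measurable_const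

lemma exp_neg_div_le (n : ℕ) {b z : ℝ} (hb : 0 < b) (hz : 0 < z) :
    Real.exp (-(b/z)) ≤ ((n.factorial : ℝ) / b^n) * z^n := by
  have hy : 0 < b / z := div_pos hb hz
  have h1 : (b/z)^n / (n.factorial : ℝ) ≤ Real.exp (b/z) := by
    calc (b/z)^n / (n.factorial : ℝ)
        ≤ ∑ i ∈ Finset.range (n+1), (b/z)^i / (i.factorial : ℝ) := by
          refine Finset.single_le_sum (f := fun i => (b/z)^i / (i.factorial : ℝ))
            (fun i _ => by positivity) (Finset.self_mem_range_succ n)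
      _ ≤ Real.exp (b/z) := Real.sum_le_exp_of_nonneg hy.le _
  have h2 : 0 < (b/z)^n / (n.factorial : ℝ) := by positivity
  have h3 : Real.exp (-(b/z)) = (Real.exp (b/z))⁻¹ := by
    rw [← Real.exp_neg]
  rw [h3]
  calc (Real.exp (b/z))⁻¹ ≤ ((b/z)^n / (n.factorial : ℝ))⁻¹ := by
        exact inv_anti₀ h2 h1
    _ = ((n.factorial : ℝ) / b^n) * z^n := by
        rw [div_pow]
        field_simp

lemma contOn_aux (ν a b : ℝ) :
    ContinuousOn (fun z : ℝ => z ^ ν * Real.exp (-(a*z) - b/z)) (Set.Ioi 0) := by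
  apply ContinuousOn.mul
  · exact fun z hz => (Real.continuousAt_rpow_const z ν (Or.inl (ne_of_gt hz))).continuousWithinAt
  · apply Continuous.comp_continuousOn Real.continuous_exp
    apply ContinuousOn.sub
    · exact ((continuous_const.mul continuous_id).neg).continuousOn
    · exact continuousOn_const.div continuousOn_id (fun z hz => ne_of_gt hz)

lemma integrableOn_aux {ν a b : ℝ} (ha : 0 < a) (hb : 0 < b) :
    IntegrableOn (fun z : ℝ => z ^ ν * Real.exp (-(a*z) - b/z)) (Set.Ioi 0) := by
  set f : ℝ → ℝ := fun z => z ^ ν * Real.exp (-(a*z) - b/z) with hf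
  have hmeas : ∀ s : Set ℝ, s ⊆ Set.Ioi 0 → MeasurableSet s → AEStronglyMeasurable f (volume.restrict s) :=
    fun s hs hsm => ((contOn_aux ν a b).mono hs).aestronglyMeasurable hsm
  have hnn : ∀ {z : ℝ}, 0 < z → ‖f z‖ = f z := fun {z} hz => by
    rw [Real.norm_eq_abs, abs_of_nonneg]
    positivity
  rw [← Set.Ioc_union_Ioi_eq_Ioi (zero_le_one (α := ℝ))]
  apply MeasureTheory.IntegrableOn.union
  · -- on Ioc 0 1 : bounded by constant
    set n : ℕ := ⌈-ν⌉₊ with hn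
    set M : ℝ := (n.factorial : ℝ) / b^n with hM
    refine Integrable.mono' (g := fun _ => M) (integrableOn_const measure_Ioc_lt_top.ne)
      (hmeas _ (fun z hz => hz.1) measurableSet_Ioc) ?_
    filter_upwards [ae_restrict_mem measurableSet_Ioc] with z hz
    have hz0 : 0 < z := hz.1
    rw [hnn hz0]
    have h1 : Real.exp (-(a*z) - b/z) ≤ Real.exp (-(b/z)) := by
      apply Real.exp_le_exp.mpr
      have : 0 ≤ a * z := by positivity
      linarith
    calc f z ≤ z ^ ν * Real.exp (-(b/z)) := by
          exact mul_le_mul_of_nonneg_left h1 (Real.rpow_nonneg hz0.le _)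
      _ ≤ z ^ ν * (M * z^n) := by
          exact mul_le_mul_of_nonneg_left (exp_neg_div_le n hb hz0) (Real.rpow_nonneg hz0.le _)
      _ = M * z ^ (ν + n) := by
          rw [Real.rpow_add hz0, Real.rpow_natCast]; ring
      _ ≤ M * 1 := by
          apply mul_le_mul_of_nonneg_left _ (by positivity)
          apply Real.rpow_le_one hz0.le hz.2
          have := Nat.le_ceil (-ν)
          rw [← hn] at this
          linarith
      _ = M := mul_one M
  · -- on Ioi 1 : bounded by integrable function
    set m : ℕ := ⌈ν⌉₊ with hm
    have hg : IntegrableOn (fun z : ℝ => z ^ (m:ℝ) * Real.exp (-(a*z))) (Set.Ioi 0) := by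
      have h0 : IntegrableOn (fun x : ℝ => Real.exp (-x) * x ^ ((m:ℝ)+1-1)) (Set.Ioi 0) :=
        Real.GammaIntegral_convergent (by positivity)
      have h1 := (integrableOn_Ioi_comp_mul_left_iff
        (fun x : ℝ => Real.exp (-x) * x ^ ((m:ℝ)+1-1)) 0 ha).mpr (by simpa using h0)
      have h2 := h1.const_mul (a ^ (-(m:ℝ)))
      refine IntegrableOn.congr_fun h2 (fun x hx => ?_) measurableSet_Ioi
      have hx0 : (0:ℝ) < x := hx
      rw [add_sub_cancel_right, Real.mul_rpow ha.le hx0.le]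
      have hone : a ^ (-(m:ℝ)) * a ^ (m:ℝ) = 1 := by
        rw [← Real.rpow_add ha]; simp
      rw [show a ^ (-(m:ℝ)) * (Real.exp (-(a*x)) * (a ^ (m:ℝ) * x ^ (m:ℝ)))
          = (a ^ (-(m:ℝ)) * a ^ (m:ℝ)) * (x ^ (m:ℝ) * Real.exp (-(a*x))) from by ring, hone, one_mul]
    refine Integrable.mono' (hg.mono_set (Set.Ioi_subset_Ioi zero_le_one))
      (hmeas _ (fun z hz => (lt_trans zero_lt_one hz : (0:ℝ) < z)) measurableSet_Ioi) ?_
    filter_upwards [ae_restrict_mem measurableSet_Ioi] with z hz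
    have hz1 : (1:ℝ) < z := hz
    have hz0 : 0 < z := lt_trans zero_lt_one hz1
    rw [hnn hz0]
    calc f z ≤ z ^ ν * Real.exp (-(a*z)) := by
          apply mul_le_mul_of_nonneg_left _ (Real.rpow_nonneg hz0.le _)
          apply Real.exp_le_exp.mpr
          have : 0 ≤ b / z := by positivity
          linarith
      _ ≤ z ^ (m:ℝ) * Real.exp (-(a*z)) := by
          apply mul_le_mul_of_nonneg_right _ (Real.exp_nonneg _)
          exact Real.rpow_le_rpow_of_exponent_le hz1.le (Nat.le_ceil ν)

lemma besselK_integrableOn {c : ℝ} (hc : 0 < c) (ν : ℝ) :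
    IntegrableOn (fun u : ℝ => u ^ ν * Real.exp (-c*(u+1/u))) (Set.Ioi 0) := by
  refine IntegrableOn.congr_fun (integrableOn_aux (ν := ν) hc hc) (fun u hu => ?_) measurableSet_Ioi
  have hu0 : (0:ℝ) < u := hu
  congr 1
  field_simp
  ring

lemma inv_integral (c : ℝ) (k : ℕ) :
    ∫ x in Set.Ioi (0:ℝ), x ^ (-(k:ℝ)-1) * Real.exp (-c*(x+1/x))
      = ∫ y in Set.Ioi (0:ℝ), y ^ ((k:ℝ)-1) * Real.exp (-c*(y+1/y)) := by
  have h := integral_comp_rpow_Ioi (fun y : ℝ => y ^ ((k:ℝ)-1) * Real.exp (-c*(y+1/y)))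
    (p := -1) (by norm_num)
  rw [← h]
  refine setIntegral_congr_fun measurableSet_Ioi (fun x hx => ?_)
  have hx0 : (0:ℝ) < x := hx
  have hinv : x ^ (-1:ℝ) = x⁻¹ := by
    rw [Real.rpow_neg hx0.le, Real.rpow_one]
  simp only [smul_eq_mul, hinv]
  rw [Real.inv_rpow hx0.le, ← Real.rpow_neg hx0.le]
  rw [show x⁻¹ + 1/x⁻¹ = x + x⁻¹ from by rw [one_div, inv_inv]; ring]
  rw [show |(-1:ℝ)| * x ^ ((-1:ℝ)-1) = x ^ (-2:ℝ) by norm_num]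
  rw [show x ^ (-2:ℝ) * (x ^ (-((k:ℝ)-1)) * Real.exp (-c*(x+x⁻¹)))
      = (x ^ (-2:ℝ) * x ^ (-((k:ℝ)-1))) * Real.exp (-c*(x+x⁻¹)) from by ring]
  rw [← Real.rpow_add hx0]
  ring_nf

lemma integral_eq_besselK {a b : ℝ} (ha : 0 < a) (hb : 0 < b) (k : ℕ) :
    ∫ z in Set.Ioi (0:ℝ), z ^ (-(k:ℝ)-1) * Real.exp (-(a*z) - b/z)
      = 2 * (a/b) ^ ((k:ℝ)/2) * besselK k (2 * Real.sqrt (a*b)) := by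
  set s : ℝ := Real.sqrt (b/a) with hsdef
  have hs : 0 < s := Real.sqrt_pos.mpr (by positivity)
  set c : ℝ := Real.sqrt (a*b) with hcdef
  have hc : 0 < c := Real.sqrt_pos.mpr (by positivity)
  have hs2 : s*s = b/a := Real.mul_self_sqrt (by positivity)
  have has : a * s = c := by
    have h1 : (a*s)*(a*s) = c*c := by
      rw [Real.mul_self_sqrt (by positivity)]
      calc a*s*(a*s) = a*a*(s*s) := by ring
        _ = a*a*(b/a) := by rw [hs2]
        _ = a*b := by field_simp
    nlinarith [mul_pos ha hs, hc]
  have hbs : b / s = c := by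
    have hb' : b = a * (s*s) := by rw [hs2]; field_simp
    rw [hb', ← has]; field_simp
  have hsub := integral_comp_mul_left_Ioi
    (fun z : ℝ => z ^ (-(k:ℝ)-1) * Real.exp (-(a*z) - b/z)) 0 hs
  rw [mul_zero] at hsub
  have hmain : ∫ z in Set.Ioi (0:ℝ), z ^ (-(k:ℝ)-1) * Real.exp (-(a*z) - b/z)
      = s * ∫ x in Set.Ioi (0:ℝ), (s*x) ^ (-(k:ℝ)-1) * Real.exp (-(a*(s*x)) - b/(s*x)) := by
    rw [hsub, smul_eq_mul, ← mul_assoc, mul_inv_cancel₀ hs.ne', one_mul]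
  rw [hmain]
  have hcongr : ∫ x in Set.Ioi (0:ℝ), (s*x) ^ (-(k:ℝ)-1) * Real.exp (-(a*(s*x)) - b/(s*x))
      = s ^ (-(k:ℝ)-1) * ∫ x in Set.Ioi (0:ℝ), x ^ (-(k:ℝ)-1) * Real.exp (-c*(x+1/x)) := by
    rw [← integral_const_mul]
    refine setIntegral_congr_fun measurableSet_Ioi (fun x hx => ?_)
    have hx0 : (0:ℝ) < x := hx
    rw [Real.mul_rpow hs.le hx0.le]
    have hexp : -(a*(s*x)) - b/(s*x) = -c*(x+1/x) := by
      rw [show a*(s*x) = (a*s)*x from by ring, has, show b/(s*x) = (b/s)/x from by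
        rw [div_div], hbs]
      field_simp
      ring
    rw [hexp]; ring
  rw [hcongr, inv_integral c k]
  have hbk : besselK k (2*c) = (1/2) * ∫ y in Set.Ioi (0:ℝ), y ^ ((k:ℝ)-1) * Real.exp (-c*(y+1/y)) := by
    rw [besselK]
    norm_num
  have hJ : ∫ y in Set.Ioi (0:ℝ), y ^ ((k:ℝ)-1) * Real.exp (-c*(y+1/y)) = 2 * besselK k (2*c) := by
    rw [hbk]; ring
  rw [hJ]
  have hpow : s * s ^ (-(k:ℝ)-1) = (a/b) ^ ((k:ℝ)/2) := by
    rw [show s * s ^ (-(k:ℝ)-1) = s ^ (1:ℝ) * s ^ (-(k:ℝ)-1) from by rw [Real.rpow_one],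
      ← Real.rpow_add hs]
    rw [show (1:ℝ) + (-(k:ℝ)-1) = -(k:ℝ) from by ring]
    have hba : (0:ℝ) < b/a := div_pos hb ha
    rw [hsdef, Real.sqrt_eq_rpow, ← Real.rpow_mul hba.le]
    rw [show (1/2) * (-(k:ℝ)) = -((k:ℝ)/2) from by ring]
    rw [Real.rpow_neg hba.le, ← Real.inv_rpow hba.le, inv_div]
  rw [← mul_assoc, hpow]
  ring

lemma key_eval {L : ℕ} (hL : 1 ≤ L) {B C t θ q : ℝ} (hB : 0<B) (hC : 0<C) (ht : 0<t)
    (hth : θ = 1/C + 1/t) (hq : 0 < q) :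
    IntegrableOn (fun z : ℝ => Real.exp (-((1/B)*z)) * z⁻¹ *
        (Real.exp (-((q/z)/C)) * lowerGamma L ((q/z)/t))) (Set.Ioi 0) ∧
    ∫ z in Set.Ioi (0:ℝ), Real.exp (-((1/B)*z)) * z⁻¹ *
        (Real.exp (-((q/z)/C)) * lowerGamma L ((q/z)/t))
      = ((L-1).factorial : ℝ) * (2 * besselK 0 (2*Real.sqrt ((1/B)*(q/C))))
        - ∑ k ∈ Finset.range L, ((L-1).factorial : ℝ) * (q/t)^k / (k.factorial : ℝ) *
            (2 * (((1/B)/(q*θ)) ^ ((k:ℝ)/2)) * besselK k (2*Real.sqrt ((1/B)*(q*θ)))) := by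
  have hθpos : 0 < θ := by rw [hth]; positivity
  have hPint : IntegrableOn (fun z : ℝ => z ^ (-((0:ℕ):ℝ)-1) * Real.exp (-((1/B)*z) - (q/C)/z))
      (Set.Ioi 0) := integrableOn_aux (by positivity) (by positivity)
  have hWint : ∀ k : ℕ, IntegrableOn (fun z : ℝ => z ^ (-(k:ℝ)-1) * Real.exp (-((1/B)*z) - (q*θ)/z))
      (Set.Ioi 0) := fun k => integrableOn_aux (by positivity) (by positivity)
  have hrepr : ∀ z ∈ Set.Ioi (0:ℝ), Real.exp (-((1/B)*z)) * z⁻¹ *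
        (Real.exp (-((q/z)/C)) * lowerGamma L ((q/z)/t))
      = ((L-1).factorial : ℝ) * (z ^ (-((0:ℕ):ℝ)-1) * Real.exp (-((1/B)*z) - (q/C)/z))
        - ∑ k ∈ Finset.range L, (((L-1).factorial : ℝ) * (q/t)^k / (k.factorial : ℝ)) *
            (z ^ (-(k:ℝ)-1) * Real.exp (-((1/B)*z) - (q*θ)/z)) := by
    intro z hz
    have hz0 : (0:ℝ) < z := hz
    rw [lowerGamma_eq L hL, if_pos (by positivity)]
    have p2 : ∀ k : ℕ, z ^ (-(k:ℝ)-1) = (z^(k+1))⁻¹ := by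
      intro k
      rw [show -(k:ℝ)-1 = -((k+1:ℕ):ℝ) by push_cast; ring, Real.rpow_neg hz0.le,
        Real.rpow_natCast]
    have p1 : z ^ (-((0:ℕ):ℝ)-1) = z⁻¹ := by
      rw [p2 0]; norm_num
    have e1 : Real.exp (-((1/B)*z) - (q/C)/z)
        = Real.exp (-((1/B)*z)) * Real.exp (-((q/z)/C)) := by
      rw [← Real.exp_add]; congr 1; field_simp; ring
    have e2 : ∀ k : ℕ, Real.exp (-((1/B)*z) - (q*θ)/z)
        = Real.exp (-((1/B)*z)) * Real.exp (-((q/z)/C)) * Real.exp (-((q/z)/t)) := by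
      intro _
      rw [← Real.exp_add, ← Real.exp_add]; congr 1; rw [hth]; field_simp; ring
    rw [p1, e1]
    have hterm : ∀ k ∈ Finset.range L,
        (((L-1).factorial : ℝ) * (q/t)^k / (k.factorial : ℝ)) *
          (z ^ (-(k:ℝ)-1) * Real.exp (-((1/B)*z) - (q*θ)/z))
        = (Real.exp (-((1/B)*z)) * z⁻¹ * Real.exp (-((q/z)/C)) * ((L-1).factorial : ℝ) *
            Real.exp (-((q/z)/t))) * (((q/z)/t)^k / (k.factorial : ℝ)) := by
      intro k _
      rw [p2 k, e2 k]
      have hkf : ((k.factorial : ℝ)) ≠ 0 := Nat.cast_ne_zero.mpr k.factorial_ne_zero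
      field_simp
      have hqtz : (q/(t*z))^k = (q/t)^k / z^k := by rw [div_mul_eq_div_div, div_pow]
      rw [hqtz, pow_succ]; field_simp
    rw [Finset.sum_congr rfl hterm, ← Finset.mul_sum]
    ring
  constructor
  · refine IntegrableOn.congr_fun ?_ (fun z hz => (hrepr z hz).symm) measurableSet_Ioi
    exact (hPint.const_mul _).sub (integrable_finset_sum _ (fun k _ => (hWint k).const_mul _))
  · rw [setIntegral_congr_fun measurableSet_Ioi hrepr]
    rw [integral_sub (hPint.const_mul _)
      (integrable_finset_sum _ (fun k _ => (hWint k).const_mul _))]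
    rw [integral_const_mul, integral_finset_sum _ (fun k _ => (hWint k).const_mul _)]
    rw [integral_eq_besselK (by positivity : (0:ℝ) < 1/B) (by positivity : (0:ℝ) < q/C) 0]
    have hsum3 : ∀ k ∈ Finset.range L,
        (∫ z in Set.Ioi (0:ℝ), (((L-1).factorial : ℝ) * (q/t)^k / (k.factorial : ℝ)) *
            (z ^ (-(k:ℝ)-1) * Real.exp (-((1/B)*z) - (q*θ)/z)))
        = (((L-1).factorial : ℝ) * (q/t)^k / (k.factorial : ℝ)) *
          ∫ z in Set.Ioi (0:ℝ), z ^ (-(k:ℝ)-1) * Real.exp (-((1/B)*z) - (q*θ)/z) :=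
      fun k _ => integral_const_mul _ _
    have hsum2 : ∀ k ∈ Finset.range L,
        (((L-1).factorial : ℝ) * (q/t)^k / (k.factorial : ℝ)) *
          ∫ z in Set.Ioi (0:ℝ), z ^ (-(k:ℝ)-1) * Real.exp (-((1/B)*z) - (q*θ)/z)
        = ((L-1).factorial : ℝ) * (q/t)^k / (k.factorial : ℝ) *
            (2 * (((1/B)/(q*θ)) ^ ((k:ℝ)/2)) * besselK k (2*Real.sqrt ((1/B)*(q*θ)))) := by
      intro k _
      rw [integral_eq_besselK (by positivity : (0:ℝ) < 1/B) (by positivity : (0:ℝ) < q*θ) k]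
    rw [Finset.sum_congr rfl hsum3, Finset.sum_congr rfl hsum2]
    norm_num

open ENNReal in
lemma map_mul_prod (f g : ℝ → ℝ≥0∞) (hf : Measurable f) (hg : Measurable g)
    (hf0 : ∀ z : ℝ, z < 0 → f z = 0) :
    Measure.map (fun p : ℝ × ℝ => p.1 * p.2) ((volume.withDensity f).prod (volume.withDensity g))
      = volume.withDensity
          (fun q => ∫⁻ z in Set.Ioi (0:ℝ), f z * ENNReal.ofReal z⁻¹ * g (q / z)) := by
  have hmul : Measurable (fun p : ℝ × ℝ => p.1 * p.2) := measurable_fst.mul measurable_snd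
  ext s hs
  rw [Measure.map_apply hmul hs, withDensity_apply _ hs]
  rw [Measure.prod_apply (hs.preimage hmul)]
  have hsec : ∀ x : ℝ, 0 < x →
      (volume.withDensity g) (Prod.mk x ⁻¹' ((fun p : ℝ × ℝ => p.1 * p.2) ⁻¹' s))
        = ENNReal.ofReal x⁻¹ * ∫⁻ q, s.indicator (fun _ => (1:ℝ≥0∞)) q * g (q / x) := by
    intro x hx
    have hpre : Prod.mk x ⁻¹' ((fun p : ℝ × ℝ => p.1 * p.2) ⁻¹' s) = (fun z => x * z) ⁻¹' s := rfl
    rw [hpre, withDensity_apply _ (hs.preimage (measurable_const_mul x))]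
    rw [← lintegral_indicator (hs.preimage (measurable_const_mul x))]
    have hH : Measurable (fun q => s.indicator (fun _ => (1:ℝ≥0∞)) q * g (q / x)) :=
      (measurable_one.indicator hs).mul (hg.comp (measurable_id.div_const x))
    have hmap := Real.map_volume_mul_left (ne_of_gt hx)
    have hlm := lintegral_map (μ := volume) hH (measurable_const_mul x)
    rw [hmap, lintegral_smul_measure] at hlm
    have hptw : ∀ z : ℝ, ((fun z => x * z) ⁻¹' s).indicator g z
        = s.indicator (fun _ => (1:ℝ≥0∞)) (x * z) * g ((x * z) / x) := by
      intro z
      rw [mul_div_cancel_left₀ _ (ne_of_gt hx)]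
      by_cases hzs : x * z ∈ s
      · have hz' : z ∈ (fun z => x * z) ⁻¹' s := hzs
        rw [Set.indicator_of_mem hz', Set.indicator_of_mem hzs, one_mul]
      · have hz' : z ∉ (fun z => x * z) ⁻¹' s := hzs
        rw [Set.indicator_of_notMem hz', Set.indicator_of_notMem hzs, zero_mul]
    rw [lintegral_congr hptw, ← hlm, abs_of_pos (inv_pos.mpr hx), smul_eq_mul]
  calc ∫⁻ x, (volume.withDensity g) (Prod.mk x ⁻¹' ((fun p : ℝ × ℝ => p.1 * p.2) ⁻¹' s))
        ∂(volume.withDensity f)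
      = ∫⁻ x, f x * (volume.withDensity g) (Prod.mk x ⁻¹' ((fun p : ℝ × ℝ => p.1 * p.2) ⁻¹' s))
        ∂volume := by
        rw [lintegral_withDensity_eq_lintegral_mul _ hf
          (measurable_measure_prodMk_left (hs.preimage hmul))]
        rfl
    _ = ∫⁻ x in Set.Ioi (0:ℝ), f x * (volume.withDensity g)
          (Prod.mk x ⁻¹' ((fun p : ℝ × ℝ => p.1 * p.2) ⁻¹' s)) ∂volume := by
        rw [← lintegral_add_compl (μ := volume)
          (f := fun x => f x * (volume.withDensity g)
            (Prod.mk x ⁻¹' ((fun p : ℝ × ℝ => p.1 * p.2) ⁻¹' s))) measurableSet_Ioi]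
        have hzero : ∫⁻ x in (Set.Ioi (0:ℝ))ᶜ, f x * (volume.withDensity g)
            (Prod.mk x ⁻¹' ((fun p : ℝ × ℝ => p.1 * p.2) ⁻¹' s)) ∂volume = 0 := by
          have hae : ∀ᵐ x ∂(volume.restrict (Set.Ioi (0:ℝ))ᶜ), x ≠ 0 :=
            ae_restrict_of_ae (by
              rw [ae_iff]
              simpa [Set.setOf_eq_eq_singleton] using measure_singleton (0:ℝ))
          rw [lintegral_eq_zero_iff (by exact hf.mul (measurable_measure_prodMk_left (hs.preimage hmul)) : Measurable fun x => f x * (volume.withDensity g) (Prod.mk x ⁻¹' ((fun p : ℝ × ℝ => p.1 * p.2) ⁻¹' s)))]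
          filter_upwards [hae, ae_restrict_mem measurableSet_Ioi.compl] with x hx1 hx2
          have : x < 0 := by
            simp only [Set.compl_Ioi, Set.mem_Iic] at hx2
            exact lt_of_le_of_ne hx2 hx1
          simp [hf0 x this]
        rw [hzero, add_zero]
    _ = ∫⁻ x in Set.Ioi (0:ℝ), ∫⁻ q, (f x * ENNReal.ofReal x⁻¹) *
          (s.indicator (fun _ => (1:ℝ≥0∞)) q * g (q / x)) ∂volume ∂volume := by
        refine setLIntegral_congr_fun measurableSet_Ioi (fun x hx => ?_)
        have hH2 : Measurable (fun q : ℝ => s.indicator (fun _ => (1:ℝ≥0∞)) q * g (q / x)) :=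
          (measurable_one.indicator hs).mul (hg.comp (measurable_id.div_const x))
        rw [hsec x hx, lintegral_const_mul _ hH2, mul_assoc]
    _ = ∫⁻ q, ∫⁻ x in Set.Ioi (0:ℝ), (f x * ENNReal.ofReal x⁻¹) *
          (s.indicator (fun _ => (1:ℝ≥0∞)) q * g (q / x)) ∂volume ∂volume := by
        refine lintegral_lintegral_swap ?_
        apply Measurable.aemeasurable
        apply Measurable.mul
        · exact (hf.comp measurable_fst).mul
            (ENNReal.measurable_ofReal.comp (measurable_fst.inv))
        · exact ((measurable_one.indicator hs).comp measurable_snd).mul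
            (hg.comp (measurable_snd.div measurable_fst))
    _ = ∫⁻ q, s.indicator (fun _ => (1:ℝ≥0∞)) q *
          ∫⁻ x in Set.Ioi (0:ℝ), f x * ENNReal.ofReal x⁻¹ * g (q / x) ∂volume ∂volume := by
        refine lintegral_congr (fun q => ?_)
        by_cases hqs : q ∈ s
        · simp only [Set.indicator_of_mem hqs, one_mul]
        · simp [Set.indicator_of_notMem hqs]
    _ = ∫⁻ q in s, ∫⁻ x in Set.Ioi (0:ℝ), f x * ENNReal.ofReal x⁻¹ * g (q / x) ∂volume ∂volume := by
        rw [← lintegral_indicator hs]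
        refine lintegral_congr (fun q => ?_)
        by_cases hqs : q ∈ s
        · simp [Set.indicator_of_mem hqs]
        · simp [Set.indicator_of_notMem hqs]

lemma coefpow {B θ q : ℝ} (hB : 0 < B) (hθ : 0 < θ) (hq : 0 < q) (k : ℕ) :
    (q:ℝ)^k * ((1/B)/(q*θ)) ^ ((k:ℝ)/2) = (B*θ)^(-(k:ℝ)/2) * q^((k:ℝ)/2) := by
  have h1 : (1/B)/(q*θ) = ((B*θ)*q)⁻¹ := by field_simp
  rw [h1, ← Real.rpow_natCast q k]
  rw [Real.inv_rpow (by positivity), ← Real.rpow_neg (by positivity)]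
  rw [Real.mul_rpow (by positivity) (by positivity)]
  rw [show ((q:ℝ) ^ ((k:ℕ):ℝ) * ((B*θ) ^ (-((k:ℝ)/2)) * q ^ (-((k:ℝ)/2))))
      = (B*θ) ^ (-((k:ℝ)/2)) * (q ^ (((k:ℕ):ℝ)) * q ^ (-((k:ℝ)/2))) from by ring]
  rw [← Real.rpow_add hq]
  rw [show (((k:ℕ):ℝ)) + (-((k:ℝ)/2)) = (k:ℝ)/2 from by push_cast; ring]
  rw [neg_div]


/-- If `Z₂ ~ Exp(mean B)` and `Z` has the density of the sum of a
`Gamma(L, A)` and an independent `Exp(mean C)` (`A < C`, `t = (1/A - 1/C)⁻¹`),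
with `Z₂ ⟂ Z`, then `Q = Z₂ · Z` has density
`f_Q(q) = (2 t^L/(B C A^L)) [K₀(2√(q/(BC))) -
  ∑_{j=0}^{L-1} ((Bθ)^(-j/2) q^(j/2) / (t^j Γ(j+1))) K_j(2√(qθ/B))]` on `(0,∞)`,
where `θ = 1/C + 1/t`. -/
theorem stmt19 {Ω : Type*} [MeasureSpace Ω] (μ : Measure Ω) [IsProbabilityMeasure μ]
    (Z₂ Z : Ω → ℝ) (L : ℕ) (hL : 1 ≤ L) (A B C t θ : ℝ)
    (hA : 0 < A) (hB : 0 < B) (hC : 0 < C) (hAC : A < C)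
    (ht : t = (1 / A - 1 / C)⁻¹) (hθ : θ = 1 / C + 1 / t)
    (hZ₂ : Measure.map Z₂ μ = expMeasure (1 / B))
    (hZ : Measure.map Z μ =
      volume.withDensity fun z => ENNReal.ofReal
        (if 0 < z then
          t ^ L / ((Nat.factorial (L - 1) : ℝ) * A ^ L * C) *
            Real.exp (-z / C) * lowerGamma L (z / t)
        else 0))
    (hIndep : IndepFun Z₂ Z μ) :
    Measure.map (fun ω => Z₂ ω * Z ω) μ =
      volume.withDensity fun q => ENNReal.ofReal
        (if 0 < q then
          2 * t ^ L / (B * C * A ^ L) *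
            (besselK 0 (2 * Real.sqrt (q / (B * C))) -
              ∑ j ∈ Finset.range L,
                (B * θ) ^ (-(j : ℝ) / 2) * q ^ ((j : ℝ) / 2) /
                    (t ^ j * (Nat.factorial j : ℝ)) *
                  besselK j (2 * Real.sqrt (q * θ / B)))
        else 0) := by
  have htpos : 0 < t := by
    rw [ht]
    have h1 : 1/C < 1/A := by
      apply one_div_lt_one_div_of_lt hA hAC
    have : 0 < 1/A - 1/C := by linarith
    positivity
  have hθpos : 0 < θ := by rw [hθ]; positivity
  set K0 : ℝ := t ^ L / ((Nat.factorial (L - 1) : ℝ) * A ^ L * C) with hK0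
  have hK0pos : 0 < K0 := by
    rw [hK0]
    have : (0:ℝ) < (Nat.factorial (L-1) : ℝ) := by positivity
    positivity
  set D : ℝ → ℝ≥0∞ := fun z => ENNReal.ofReal
      (if 0 < z then K0 * Real.exp (-z / C) * lowerGamma L (z / t) else 0) with hD
  have hDmeas : Measurable D := by
    apply ENNReal.measurable_ofReal.comp
    apply Measurable.ite (measurableSet_lt measurable_const measurable_id)
    · exact (measurable_const.mul
        (Real.measurable_exp.comp (measurable_id.neg.div_const C))).mul
        ((lowerGamma_measurable L hL).comp (measurable_id.div_const t))
    · exact measurable_const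
  have hDpos : ∀ z : ℝ, 0 < z → D z ≠ 0 := by
    intro z hz
    rw [hD]
    simp only [if_pos hz]
    rw [ne_eq, ENNReal.ofReal_eq_zero, not_le]
    exact mul_pos (mul_pos hK0pos (Real.exp_pos _)) (lowerGamma_pos L (by positivity))
  -- a.e.-measurability of Z₂ and Z
  have hZ₂m : AEMeasurable Z₂ μ := by
    by_contra h
    rw [Measure.map_of_not_aemeasurable h] at hZ₂
    have hprob := isProbabilityMeasure_expMeasure (r := 1/B) (by positivity)
    rw [← hZ₂] at hprob
    have h1 : (0 : Measure ℝ) Set.univ = 1 := hprob.measure_univ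
    simp only [Measure.coe_zero, Pi.zero_apply] at h1
    exact zero_ne_one h1
  have hZm : AEMeasurable Z μ := by
    by_contra h
    rw [Measure.map_of_not_aemeasurable h] at hZ
    have h0 : (volume.withDensity D) (Set.Ioi (0:ℝ)) = 0 := by rw [← hZ]; rfl
    rw [withDensity_apply _ measurableSet_Ioi] at h0
    rw [lintegral_eq_zero_iff hDmeas] at h0
    have h1 : ∀ᵐ x ∂(volume : Measure ℝ), x ∈ Set.Ioi (0:ℝ) → D x = 0 :=
      (ae_restrict_iff' measurableSet_Ioi).mp h0
    have h2 : volume (Set.Ioi (0:ℝ)) = 0 := by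
      refine measure_mono_null ?_ (ae_iff.mp h1)
      intro x hx
      simp only [Set.mem_setOf_eq, not_forall]
      exact ⟨hx, hDpos x hx⟩
    rw [Real.volume_Ioi] at h2
    exact ENNReal.top_ne_zero h2
  -- product structure
  have hPair := (indepFun_iff_map_prod_eq_prod_map_map hZ₂m hZm).mp hIndep
  have hmulmeas : Measurable (fun p : ℝ × ℝ => p.1 * p.2) := measurable_fst.mul measurable_snd
  have hcomp : Measure.map (fun ω => Z₂ ω * Z ω) μ
      = Measure.map (fun p : ℝ × ℝ => p.1 * p.2) (Measure.map (fun ω => (Z₂ ω, Z ω)) μ) := by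
    rw [AEMeasurable.map_map_of_aemeasurable hmulmeas.aemeasurable (hZ₂m.prodMk hZm)]
    rfl
  rw [hcomp, hPair, hZ₂, hZ]
  have hexpD : expMeasure (1/B) = volume.withDensity (exponentialPDF (1/B)) := rfl
  rw [hexpD]
  have hexp_meas : Measurable (exponentialPDF (1/B)) :=
    ENNReal.measurable_ofReal.comp (measurable_exponentialPDFReal (1/B))
  rw [show (volume.withDensity fun z => ENNReal.ofReal
      (if 0 < z then t ^ L / ((Nat.factorial (L - 1) : ℝ) * A ^ L * C) *
        Real.exp (-z / C) * lowerGamma L (z / t) else 0)) = volume.withDensity D from rfl]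
  rw [map_mul_prod _ _ hexp_meas hDmeas (fun z hz => exponentialPDF_of_neg hz)]
  refine withDensity_congr_ae (Filter.Eventually.of_forall (fun q => ?_))
  dsimp only
  by_cases hq : 0 < q
  · -- main computation
    have hc0 : (0:ℝ) ≤ 1/B * K0 := by positivity
    have hptw : ∀ z ∈ Set.Ioi (0:ℝ),
        exponentialPDF (1/B) z * ENNReal.ofReal z⁻¹ * D (q / z)
          = ENNReal.ofReal ((1/B * K0) * (Real.exp (-((1/B)*z)) * z⁻¹ *
              (Real.exp (-((q/z)/C)) * lowerGamma L ((q/z)/t)))) := by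
      intro z hz
      have hz0 : (0:ℝ) < z := hz
      rw [exponentialPDF_of_nonneg hz0.le, hD]
      simp only [if_pos (div_pos hq hz0)]
      rw [← ENNReal.ofReal_mul (by positivity), ← ENNReal.ofReal_mul (by positivity)]
      congr 1
      have hlg : lowerGamma L (q / z / t) = lowerGamma L ((q/z)/t) := rfl
      ring_nf
    calc ∫⁻ z in Set.Ioi (0:ℝ), exponentialPDF (1/B) z * ENNReal.ofReal z⁻¹ * D (q / z)
        = ∫⁻ z in Set.Ioi (0:ℝ), ENNReal.ofReal ((1/B * K0) * (Real.exp (-((1/B)*z)) * z⁻¹ *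
            (Real.exp (-((q/z)/C)) * lowerGamma L ((q/z)/t)))) :=
          setLIntegral_congr_fun measurableSet_Ioi hptw
      _ = ENNReal.ofReal (∫ z in Set.Ioi (0:ℝ), (1/B * K0) * (Real.exp (-((1/B)*z)) * z⁻¹ *
            (Real.exp (-((q/z)/C)) * lowerGamma L ((q/z)/t)))) := by
          refine (MeasureTheory.ofReal_integral_eq_lintegral_ofReal ?_ ?_).symm
          · exact ((key_eval hL hB hC htpos hθ hq).1.const_mul _)
          · filter_upwards [ae_restrict_mem measurableSet_Ioi] with z hz
            have hz0 : (0:ℝ) < z := hz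
            have := lowerGamma_nonneg L ((q/z)/t)
            positivity
      _ = ENNReal.ofReal (if 0 < q then
            2 * t ^ L / (B * C * A ^ L) *
              (besselK 0 (2 * Real.sqrt (q / (B * C))) -
                ∑ j ∈ Finset.range L,
                  (B * θ) ^ (-(j : ℝ) / 2) * q ^ ((j : ℝ) / 2) /
                      (t ^ j * (Nat.factorial j : ℝ)) *
                    besselK j (2 * Real.sqrt (q * θ / B)))
          else 0) := by
          rw [if_pos hq]
          congr 1
          rw [MeasureTheory.integral_const_mul, (key_eval hL hB hC htpos hθ hq).2]
          rw [show (1/B)*(q/C) = q/(B*C) from by ring, show (1/B)*(q*θ) = q*θ/B from by ring]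
          rw [mul_sub, mul_sub, Finset.mul_sum, Finset.mul_sum]
          congr 1
          · have hLf : (0:ℝ) < ((L-1).factorial : ℝ) := by positivity
            rw [hK0]
            field_simp
          · refine Finset.sum_congr rfl (fun k _ => ?_)
            have hqk : (q:ℝ)^k ≠ 0 := by positivity
            have hpow' : ((1/B)/(q*θ)) ^ ((k:ℝ)/2)
                = (B*θ)^(-(k:ℝ)/2) * q^((k:ℝ)/2) / q^k := by
              rw [eq_div_iff hqk, mul_comm (((1:ℝ)/B/(q*θ)) ^ ((k:ℝ)/2)) _]
              exact coefpow hB hθpos hq k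
            rw [hpow', div_pow q t k, hK0]
            have hLf : (0:ℝ) < ((L-1).factorial : ℝ) := by positivity
            have hkf : (0:ℝ) < (k.factorial : ℝ) := by positivity
            field_simp
    done
  · -- q ≤ 0 : both sides vanish
    rw [if_neg hq, ENNReal.ofReal_zero]
    have hptw : ∀ z ∈ Set.Ioi (0:ℝ),
        exponentialPDF (1/B) z * ENNReal.ofReal z⁻¹ * D (q / z) = 0 := by
      intro z hz
      have hz0 : (0:ℝ) < z := hz
      have hqz : ¬ (0 < q / z) := by
        rw [not_lt]
        exact div_nonpos_of_nonpos_of_nonneg (le_of_not_gt hq) hz0.le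
      rw [hD]
      simp only [if_neg hqz, ENNReal.ofReal_zero, mul_zero]
    rw [setLIntegral_congr_fun measurableSet_Ioi hptw]
    simp
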